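/- Fix R > 0, c > 0, γ ∈ ℝ, and α0, β0 > 0, and consider the private-sampling game defined in the context. The profile with q0 = q1 = 1 and σ_D(p) = 1 for all p ∈ [0,1] is a pure-strategy equilibrium if and only if ((α0 + θ)/(α0 + β0 + 1) − γ)·R ≥ c for every θ ∈ {0,1}, equivalently if and only if (α0/(α0 + β0 + 1) − γ)·R ≥ c. -/
import Mathlib


open intervalIntegral

/-- The Beta function `B(a,b) = ∫_0^1 t^(a−1)(1−t)^(b−1) dt`. -/
noncomputable def betaFn (a b : ℝ) : ℝ :=
  ∫ t in (0:ℝ)..1, t ^ (a - 1) * (1 - t) ^ (b - 1)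

/-- The regularized incomplete Beta function
`I_x(a,b) = (∫_0^x t^(a−1)(1−t)^(b−1) dt) / B(a,b)`. -/
noncomputable def regIncBeta (x a b : ℝ) : ℝ :=
  (∫ t in (0:ℝ)..x, t ^ (a - 1) * (1 - t) ^ (b - 1)) / betaFn a b

/-- The attacker's posterior mean `m(θ) = (α0+θ)/(α0+β0+1)`. -/
noncomputable def postMean (α0 β0 θ : ℝ) : ℝ := (α0 + θ) / (α0 + β0 + 1)

/-- The attacker's conditional expectation of the defender's strategy,
`E_D(θ) = (∫_0^1 σ_D(p)·p^(α0+θ−1)(1−p)^(β0−θ) dp) / B(α0+θ, β0+1−θ)`. -/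
noncomputable def expDef (α0 β0 θ : ℝ) (σD : ℝ → ℝ) : ℝ :=
  (∫ p in (0:ℝ)..1, σD p * (p ^ (α0 + θ - 1) * (1 - p) ^ (β0 - θ)))
    / betaFn (α0 + θ) (β0 + 1 - θ)

/-- The attacker's (reduced) objective given sample `θ`:
`σ ↦ σ·((m(θ) − γ)R + c·(1 − 2E_D(θ)))`. -/
noncomputable def attackerObj (R c γ α0 β0 θ : ℝ) (σD : ℝ → ℝ) (σ : ℝ) : ℝ :=
  σ * ((postMean α0 β0 θ - γ) * R + c * (1 - 2 * expDef α0 β0 θ σD))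

/-- `(q0, q1, σ_D)` is a pure-strategy equilibrium of the private-sampling game:
all strategies are probabilities, `q_θ` maximizes the attacker's objective for each
sample `θ ∈ {0,1}`, and for every `p ∈ [0,1]` with `p ≠ 1/2`, `σ_D(p)` minimizes
the defender's objective `σ ↦ σ·(1 − 2((1−p)q0 + p·q1))`. -/
def IsPureEq (R c γ α0 β0 : ℝ) (q0 q1 : ℝ) (σD : ℝ → ℝ) : Prop :=
  q0 ∈ Set.Icc (0:ℝ) 1 ∧ q1 ∈ Set.Icc (0:ℝ) 1
    ∧ (∀ p ∈ Set.Icc (0:ℝ) 1, σD p ∈ Set.Icc (0:ℝ) 1)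
    ∧ (∀ σ ∈ Set.Icc (0:ℝ) 1,
        attackerObj R c γ α0 β0 0 σD σ ≤ attackerObj R c γ α0 β0 0 σD q0)
    ∧ (∀ σ ∈ Set.Icc (0:ℝ) 1,
        attackerObj R c γ α0 β0 1 σD σ ≤ attackerObj R c γ α0 β0 1 σD q1)
    ∧ (∀ p ∈ Set.Icc (0:ℝ) 1, p ≠ 1/2 → ∀ σ ∈ Set.Icc (0:ℝ) 1,
        σD p * (1 - 2 * ((1 - p) * q0 + p * q1))
          ≤ σ * (1 - 2 * ((1 - p) * q0 + p * q1)))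

lemma betaIntegrand_integrable {a b : ℝ} (ha : 0 < a) (hb : 0 < b) :
    IntervalIntegrable (fun t : ℝ => t ^ (a - 1) * (1 - t) ^ (b - 1)) MeasureTheory.volume 0 1 := by
  have h1 : IntervalIntegrable (fun t : ℝ => t ^ (a - 1) * (1 - t) ^ (b - 1))
      MeasureTheory.volume 0 (1/2) := by
    apply (intervalIntegrable_rpow' (by linarith) (a := 0) (b := 1/2)).mul_continuousOn
    apply ContinuousOn.rpow_const (by fun_prop)
    intro x hx
    rw [Set.uIcc_of_le (by norm_num)] at hx
    left; intro h; linarith [hx.2]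
  have h2 : IntervalIntegrable (fun t : ℝ => t ^ (a - 1) * (1 - t) ^ (b - 1))
      MeasureTheory.volume (1/2) 1 := by
    have := (intervalIntegrable_rpow' (r := b - 1) (by linarith) (a := 0) (b := 1/2)).comp_sub_left 1
    norm_num at this
    apply IntervalIntegrable.continuousOn_mul this.symm
    apply ContinuousOn.rpow_const (by fun_prop)
    intro x hx
    rw [Set.uIcc_of_le (by norm_num)] at hx
    left; intro h; linarith [hx.1]
  exact h1.trans h2

lemma betaFn_pos {a b : ℝ} (ha : 0 < a) (hb : 0 < b) : 0 < betaFn a b := by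
  apply intervalIntegral.intervalIntegral_pos_of_pos_on (betaIntegrand_integrable ha hb)
  · intro x hx
    exact mul_pos (Real.rpow_pos_of_pos hx.1 _) (Real.rpow_pos_of_pos (by linarith [hx.2]) _)
  · norm_num

lemma expDef_one {α0 β0 θ : ℝ} (ha : 0 < α0 + θ) (hb : 0 < β0 + 1 - θ) :
    expDef α0 β0 θ (fun _ => 1) = 1 := by
  have hpos := betaFn_pos ha hb
  have hnum : (∫ p in (0:ℝ)..1, (fun _ => (1:ℝ)) p *
      (p ^ (α0 + θ - 1) * (1 - p) ^ (β0 - θ))) = betaFn (α0 + θ) (β0 + 1 - θ) := by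
    unfold betaFn
    apply intervalIntegral.integral_congr
    intro t _
    simp only [one_mul]
    congr 1
    congr 1
    ring
  rw [expDef, hnum, div_self hpos.ne']


/-- region 1 of Lemma 2: both players choosing target `a`
(`q0 = q1 = 1`, `σ_D ≡ 1`) is a pure-strategy equilibrium iff
`((α0+θ)/(α0+β0+1) − γ)R ≥ c` for every `θ ∈ {0,1}`, equivalently iff
`(α0/(α0+β0+1) − γ)R ≥ c`. -/
theorem region_one (R c γ α0 β0 : ℝ)
    (hR : 0 < R) (hc : 0 < c) (hα : 0 < α0) (hβ : 0 < β0) :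
    (IsPureEq R c γ α0 β0 1 1 (fun _ => 1)
      ↔ ∀ θ ∈ ({0, 1} : Set ℝ), ((α0 + θ) / (α0 + β0 + 1) - γ) * R ≥ c)
    ∧ ((∀ θ ∈ ({0, 1} : Set ℝ), ((α0 + θ) / (α0 + β0 + 1) - γ) * R ≥ c)
      ↔ (α0 / (α0 + β0 + 1) - γ) * R ≥ c) := by
  have hE0 : expDef α0 β0 0 (fun _ => 1) = 1 := expDef_one (by linarith) (by linarith)
  have hE1 : expDef α0 β0 1 (fun _ => 1) = 1 := expDef_one (by linarith) (by linarith)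
  have hobj : ∀ θ ∈ ({0,1} : Set ℝ), ∀ σ : ℝ, attackerObj R c γ α0 β0 θ (fun _ => 1) σ =
      σ * (((α0 + θ) / (α0 + β0 + 1) - γ) * R - c) := by
    rintro θ hθ σ
    simp only [Set.mem_insert_iff, Set.mem_singleton_iff] at hθ
    rcases hθ with rfl | rfl <;>
      simp only [attackerObj, postMean, hE0, hE1] <;> ring
  constructor
  · constructor
    · rintro ⟨-, -, -, h0, h1, -⟩ θ hθ
      have hmem := hθ
      simp only [Set.mem_insert_iff, Set.mem_singleton_iff] at hmem
      rcases hmem with rfl | rfl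
      · have := h0 0 (by norm_num)
        rw [hobj 0 (by norm_num), hobj 0 (by norm_num)] at this
        simp only [ge_iff_le]
        nlinarith
      · have := h1 0 (by norm_num)
        rw [hobj 1 (by norm_num), hobj 1 (by norm_num)] at this
        simp only [ge_iff_le]
        nlinarith
    · intro h
      refine ⟨by norm_num, by norm_num, fun p _ => by norm_num, ?_, ?_, ?_⟩
      · intro σ hσ
        rw [hobj 0 (by norm_num), hobj 0 (by norm_num)]
        have hK := h 0 (by norm_num)
        nlinarith [hσ.2, hσ.1]
      · intro σ hσ
        rw [hobj 1 (by norm_num), hobj 1 (by norm_num)]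
        have hK := h 1 (by norm_num)
        nlinarith [hσ.2, hσ.1]
      · intro p _ _ σ hσ
        have : (1 - p) * 1 + p * 1 = 1 := by ring
        rw [this]
        show (1:ℝ) * (1 - 2 * 1) ≤ σ * (1 - 2 * 1)
        nlinarith [hσ.2]
  · constructor
    · intro h
      have := h 0 (by norm_num)
      simpa using this
    · intro h θ hθ
      simp only [Set.mem_insert_iff, Set.mem_singleton_iff] at hθ
      have hD : (0:ℝ) < α0 + β0 + 1 := by linarith
      rcases hθ with rfl | rfl
      · simpa using h
      · have hle : α0 / (α0 + β0 + 1) ≤ (α0 + 1) / (α0 + β0 + 1) := by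
          gcongr
          linarith
        simp only [ge_iff_le] at h ⊢
        nlinarith
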